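/- Let D be a bipartite tournament with no sinks. If two vertices are adjacent in C^M(D) for some positive integer M, then they are adjacent in C^m(D) for some positive integer m <= 4; consequently cindex(D) <= 4 and cperiod(D) = 1. -/

import Mathlib

/-- `walkN D n u v` : there is a directed walk of length `n` from `u` to `v` in the digraph `D`. -/
def walkN {V : Type*} (D : V → V → Prop) : ℕ → V → V → Prop
  | 0 => fun u v => u = v
  | n+1 => fun u v => ∃ w, D u w ∧ walkN D n w v

/-- The `m`-step competition graph of the digraph `D`. -/
def cmGraph {V : Type*} (D : V → V → Prop) (m : ℕ) : SimpleGraph V where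
  Adj u v := u ≠ v ∧ ∃ z, walkN D m u z ∧ walkN D m v z
  symm := by
    constructor
    intro u v h
    exact ⟨Ne.symm h.1, h.2.imp fun z hz => ⟨hz.2, hz.1⟩⟩
  loopless := by constructor; intro v h; exact h.1 rfl

/-- Sinks of the subdigraph of `D` induced by `S`. -/
def sinks {V : Type*} (D : V → V → Prop) (S : Set V) : Set V :=
  {v ∈ S | ∀ w ∈ S, ¬ D v w}

/-- The digraph sequence `D_0, D_1, …` (as vertex sets) associated with the sink sequence. -/
def Dseq {V : Type*} (D : V → V → Prop) : ℕ → Set V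
  | 0 => Set.univ
  | n+1 => Dseq D n \ sinks D (Dseq D n)

/-- The sink sequence `W_0, W_1, …` of `D`. -/
def Wseq {V : Type*} (D : V → V → Prop) (n : ℕ) : Set V := sinks D (Dseq D n)

/-- `k` is the sink elimination index `ζ(D)`. -/
def IsSinkElimIndex {V : Type*} (D : V → V → Prop) (k : ℕ) : Prop :=
  (Wseq D k = Dseq D k ∨ Wseq D k = ∅) ∧
  ∀ j < k, Wseq D j ≠ Dseq D j ∧ Wseq D j ≠ ∅

/-- A digraph is acyclic iff it has no directed closed walk of positive length. -/
def DigraphAcyclic {V : Type*} (D : V → V → Prop) : Prop :=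
  ∀ v : V, ∀ n : ℕ, 0 < n → ¬ walkN D n v v

/-- `D` is a bipartite tournament with bipartition `(V1, V2)`. -/
structure IsBipartiteTournament {V : Type*} (D : V → V → Prop) (V1 V2 : Set V) : Prop where
  nonempty1 : V1.Nonempty
  nonempty2 : V2.Nonempty
  union_eq : V1 ∪ V2 = Set.univ
  disj : V1 ∩ V2 = ∅
  oriented : ∀ x ∈ V1, ∀ y ∈ V2, Xor' (D x y) (D y x)
  no_intra : ∀ x y, D x y → (x ∈ V1 ∧ y ∈ V2) ∨ (x ∈ V2 ∧ y ∈ V1)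

/-- The competition graph sequence of `D` is eventually equal, starting from `q`. -/
def PeriodicFrom {V : Type*} (D : V → V → Prop) (q : ℕ) : Prop :=
  ∃ r, 0 < r ∧ ∀ i : ℕ, cmGraph D (q + i) = cmGraph D (q + r + i)

/-- `q` is the competition index of `D`. -/
def IsCindex {V : Type*} (D : V → V → Prop) (q : ℕ) : Prop :=
  0 < q ∧ PeriodicFrom D q ∧ ∀ q', 0 < q' → PeriodicFrom D q' → q ≤ q'

/-- `p` is the competition period of `D`, given that `q` is its competition index. -/
def IsCperiod {V : Type*} (D : V → V → Prop) (q p : ℕ) : Prop :=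
  0 < p ∧ cmGraph D q = cmGraph D (q + p) ∧
    ∀ p', 0 < p' → cmGraph D q = cmGraph D (q + p') → p ≤ p'

section CompetitionAux

variable {V : Type*} {D : V → V → Prop} {V1 V2 : Set V}

lemma walkN_zero' {u v : V} : walkN D 0 u v ↔ u = v := Iff.rfl

lemma walkN_succ' {n : ℕ} {u v : V} :
    walkN D (n + 1) u v ↔ ∃ w, D u w ∧ walkN D n w v := Iff.rfl

lemma walkN_one' {u v : V} : walkN D 1 u v ↔ D u v := by
  constructor
  · rintro ⟨w, h, hw⟩
    cases (walkN_zero'.mp hw)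
    exact h
  · intro h; exact ⟨v, h, rfl⟩

lemma walkN_add' :
    ∀ (a b : ℕ) (u v : V), walkN D (a + b) u v ↔ ∃ w, walkN D a u w ∧ walkN D b w v := by
  intro a
  induction a with
  | zero =>
    intro b u v
    simp only [Nat.zero_add]
    constructor
    · intro h; exact ⟨u, rfl, h⟩
    · rintro ⟨w, hw, h⟩
      cases (walkN_zero'.mp hw)
      exact h
  | succ n ih =>
    intro b u v
    have h1 : n + 1 + b = (n + b) + 1 := by omega
    rw [h1]
    constructor
    · rintro ⟨w, huw, hwk⟩
      obtain ⟨x, hx1, hx2⟩ := (ih b w v).mp hwk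
      exact ⟨x, ⟨w, huw, hx1⟩, hx2⟩
    · rintro ⟨x, ⟨w, huw, hw⟩, hx⟩
      exact ⟨w, huw, (ih b w v).mpr ⟨x, hw, hx⟩⟩

lemma cmGraph_adj' {m : ℕ} {u v : V} :
    (cmGraph D m).Adj u v ↔ u ≠ v ∧ ∃ z, walkN D m u z ∧ walkN D m v z := Iff.rfl

lemma cmAdj_succ' (hnosink : ∀ v : V, ∃ w, D v w) {m : ℕ} {u v : V}
    (h : (cmGraph D m).Adj u v) : (cmGraph D (m + 1)).Adj u v := by
  obtain ⟨hne, z, h1, h2⟩ := cmGraph_adj'.mp h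
  obtain ⟨w, hw⟩ := hnosink z
  exact cmGraph_adj'.mpr ⟨hne, w, (walkN_add' m 1 u w).mpr ⟨z, h1, walkN_one'.mpr hw⟩,
    (walkN_add' m 1 v w).mpr ⟨z, h2, walkN_one'.mpr hw⟩⟩

lemma cmAdj_le' (hnosink : ∀ v : V, ∃ w, D v w) {u v : V} {m m' : ℕ} (h : m ≤ m')
    (hadj : (cmGraph D m).Adj u v) : (cmGraph D m').Adj u v := by
  induction m', h using Nat.le_induction with
  | base => exact hadj
  | succ n hn ih => exact cmAdj_succ' hnosink ih

lemma bt_disj_elim (hD : IsBipartiteTournament D V1 V2) :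
    ∀ w, w ∈ V1 → w ∈ V2 → False := by
  intro w h1 h2
  have : w ∈ V1 ∩ V2 := ⟨h1, h2⟩
  rw [hD.disj] at this
  exact this

lemma step_side' (hD : IsBipartiteTournament D V1 V2) {x y : V} (h : D x y) :
    (x ∈ V1 → y ∈ V2) ∧ (x ∈ V2 → y ∈ V1) := by
  rcases hD.no_intra x y h with ⟨hx, hy⟩ | ⟨hx, hy⟩
  · exact ⟨fun _ => hy, fun h2 => (bt_disj_elim hD x hx h2).elim⟩
  · exact ⟨fun h1 => (bt_disj_elim hD x h1 hx).elim, fun _ => hy⟩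

lemma parity_succ : ∀ m : ℕ, (Even (m + 1) → ¬ Even m) ∧ (¬ Even (m + 1) → Even m) := by
  intro m
  constructor
  · exact fun h => Nat.even_add_one.mp h
  · intro h
    by_contra h'
    exact h (Nat.even_add_one.mpr h')

lemma walk_side' (hD : IsBipartiteTournament D V1 V2) :
    ∀ (n : ℕ) (u z : V), walkN D n u z →
      ((u ∈ V1 → (Even n → z ∈ V1) ∧ (¬ Even n → z ∈ V2)) ∧
       (u ∈ V2 → (Even n → z ∈ V2) ∧ (¬ Even n → z ∈ V1))) := by
  intro n
  induction n with
  | zero =>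
    intro u z h
    cases (walkN_zero'.mp h)
    exact ⟨fun h1 => ⟨fun _ => h1, fun he => (he Even.zero).elim⟩,
           fun h2 => ⟨fun _ => h2, fun he => (he Even.zero).elim⟩⟩
  | succ n ih =>
    intro u z h
    obtain ⟨w, huw, hwz⟩ := walkN_succ'.mp h
    have hw := ih w z hwz
    constructor
    · intro h1
      have hw2 : w ∈ V2 := (step_side' hD huw).1 h1
      exact ⟨fun hev => (hw.2 hw2).2 ((parity_succ n).1 hev),
             fun hodd => (hw.2 hw2).1 ((parity_succ n).2 hodd)⟩
    · intro h2
      have hw1 : w ∈ V1 := (step_side' hD huw).2 h2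
      exact ⟨fun hev => (hw.1 hw1).2 ((parity_succ n).1 hev),
             fun hodd => (hw.1 hw1).1 ((parity_succ n).2 hodd)⟩

lemma IsBipartiteTournament.symm' (hD : IsBipartiteTournament D V1 V2) :
    IsBipartiteTournament D V2 V1 where
  nonempty1 := hD.nonempty2
  nonempty2 := hD.nonempty1
  union_eq := by rw [Set.union_comm]; exact hD.union_eq
  disj := by rw [Set.inter_comm]; exact hD.disj
  oriented := by
    intro x hx y hy
    rcases hD.oriented y hy x hx with ⟨h1, h2⟩ | ⟨h1, h2⟩
    · exact Or.inr ⟨h1, h2⟩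
    · exact Or.inl ⟨h1, h2⟩
  no_intra := fun x y h => (hD.no_intra x y h).symm

/-- Key lemma: if `u, v` lie on the same side and share no `k`-prey for `k = 1,…,4`,
then they share no `k`-prey for any `k ≥ 1`. -/
lemma key_lemma (hD : IsBipartiteTournament D V1 V2) (hnosink : ∀ v : V, ∃ w, D v w)
    {u v : V} (hu : u ∈ V1) (hv : v ∈ V1)
    (H : ∀ k, 0 < k → k ≤ 4 → ∀ z, walkN D k u z → walkN D k v z → False) :
    ∀ k, 0 < k → ∀ z, walkN D k u z → walkN D k v z → False := by
  -- Step 1: out-neighborhoods are disjoint, so each out-neighbor of u beats v, and vice versa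
  have h1 : ∀ y, D u y → D y v := by
    intro y hy
    have hy2 : y ∈ V2 := (step_side' hD hy).1 hu
    rcases hD.oriented v hv y hy2 with ⟨h, _⟩ | ⟨h, _⟩
    · exact (H 1 one_pos (by norm_num) y (walkN_one'.mpr hy) (walkN_one'.mpr h)).elim
    · exact h
  have h1' : ∀ y, D v y → D y u := by
    intro y hy
    have hy2 : y ∈ V2 := (step_side' hD hy).1 hv
    rcases hD.oriented u hu y hy2 with ⟨h, _⟩ | ⟨h, _⟩
    · exact (H 1 one_pos (by norm_num) y (walkN_one'.mpr h) (walkN_one'.mpr hy)).elim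
    · exact h
  have hA2v : walkN D 2 u v := by
    obtain ⟨y, hy⟩ := hnosink u
    exact ⟨y, hy, v, h1 y hy, rfl⟩
  have hB2u : walkN D 2 v u := by
    obtain ⟨y, hy⟩ := hnosink v
    exact ⟨y, hy, u, h1' y hy, rfl⟩
  have huu4 : walkN D 4 u u := (walkN_add' 2 2 u u).mpr ⟨v, hA2v, hB2u⟩
  have hvv4 : walkN D 4 v v := (walkN_add' 2 2 v v).mpr ⟨u, hB2u, hA2v⟩
  have hA2side : ∀ a, walkN D 2 u a → a ∈ V1 := fun a ha =>
    ((walk_side' hD 2 u a ha).1 hu).1 (by norm_num)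
  have hB2side : ∀ b, walkN D 2 v b → b ∈ V1 := fun b hb =>
    ((walk_side' hD 2 v b hb).1 hv).1 (by norm_num)
  -- Step 2: everything two steps from u has out-neighborhood inside O(v), and symmetrically
  have claimA : ∀ a, walkN D 2 u a → ∀ y, D a y → D v y := by
    intro a ha y hy
    have hy2 : y ∈ V2 := (step_side' hD hy).1 (hA2side a ha)
    rcases hD.oriented v hv y hy2 with ⟨h, _⟩ | ⟨h, _⟩
    · exact h
    · have h4 : walkN D 4 u v := (walkN_add' 2 2 u v).mpr ⟨a, ha, y, hy, v, h, rfl⟩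
      exact (H 4 (by norm_num) le_rfl v h4 hvv4).elim
  have claimB : ∀ b, walkN D 2 v b → ∀ y, D b y → D u y := by
    intro b hb y hy
    have hy2 : y ∈ V2 := (step_side' hD hy).1 (hB2side b hb)
    rcases hD.oriented u hu y hy2 with ⟨h, _⟩ | ⟨h, _⟩
    · exact h
    · have h4 : walkN D 4 v u := (walkN_add' 2 2 v u).mpr ⟨b, hb, y, hy, u, h, rfl⟩
      exact (H 4 (by norm_num) le_rfl u huu4 h4).elim
  -- Step 3: A₃ = B₁ and B₃ = A₁
  have hA3B1 : ∀ z, walkN D 3 u z → D v z := by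
    intro z hz
    obtain ⟨w, h2, hw1⟩ := (walkN_add' 2 1 u z).mp hz
    exact claimA w h2 z (walkN_one'.mp hw1)
  have hB3A1 : ∀ z, walkN D 3 v z → D u z := by
    intro z hz
    obtain ⟨w, h2, hw1⟩ := (walkN_add' 2 1 v z).mp hz
    exact claimB w h2 z (walkN_one'.mp hw1)
  have hB1A3 : ∀ z, D v z → walkN D 3 u z := fun z hz =>
    (walkN_add' 2 1 u z).mpr ⟨v, hA2v, walkN_one'.mpr hz⟩
  have hA1B3 : ∀ z, D u z → walkN D 3 v z := fun z hz =>
    (walkN_add' 2 1 v z).mpr ⟨u, hB2u, walkN_one'.mpr hz⟩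
  -- Step 4: reach-sets are 4-periodic
  have hA5 : ∀ z, walkN D 5 u z ↔ walkN D 1 u z := by
    intro z
    constructor
    · intro h
      obtain ⟨w, h3, h2⟩ := (walkN_add' 3 2 u z).mp h
      have h3v : walkN D 3 v z := (walkN_add' 1 2 v z).mpr ⟨w, walkN_one'.mpr (hA3B1 w h3), h2⟩
      exact walkN_one'.mpr (hB3A1 z h3v)
    · intro h
      obtain ⟨w, hw1, hw2⟩ := (walkN_add' 1 2 v z).mp (hA1B3 z (walkN_one'.mp h))
      exact (walkN_add' 3 2 u z).mpr ⟨w, hB1A3 w (walkN_one'.mp hw1), hw2⟩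
  have hB5 : ∀ z, walkN D 5 v z ↔ walkN D 1 v z := by
    intro z
    constructor
    · intro h
      obtain ⟨w, h3, h2⟩ := (walkN_add' 3 2 v z).mp h
      have h3u : walkN D 3 u z := (walkN_add' 1 2 u z).mpr ⟨w, walkN_one'.mpr (hB3A1 w h3), h2⟩
      exact walkN_one'.mpr (hA3B1 z h3u)
    · intro h
      obtain ⟨w, hw1, hw2⟩ := (walkN_add' 1 2 u z).mp (hB1A3 z (walkN_one'.mp h))
      exact (walkN_add' 3 2 v z).mpr ⟨w, hA1B3 w (walkN_one'.mp hw1), hw2⟩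
  have shiftu : ∀ (k : ℕ) (z : V), walkN D (k + 5) u z ↔ walkN D (k + 1) u z := by
    intro k z
    have e1 : k + 5 = 5 + k := by omega
    have e2 : k + 1 = 1 + k := by omega
    rw [e1, e2, walkN_add' 5 k, walkN_add' 1 k]
    exact exists_congr fun w => and_congr_left fun _ => hA5 w
  have shiftv : ∀ (k : ℕ) (z : V), walkN D (k + 5) v z ↔ walkN D (k + 1) v z := by
    intro k z
    have e1 : k + 5 = 5 + k := by omega
    have e2 : k + 1 = 1 + k := by omega
    rw [e1, e2, walkN_add' 5 k, walkN_add' 1 k]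
    exact exists_congr fun w => and_congr_left fun _ => hB5 w
  -- Conclusion by (bounded) induction
  have final : ∀ n : ℕ, ∀ j ≤ n, 0 < j → ∀ z, walkN D j u z → walkN D j v z → False := by
    intro n
    induction n with
    | zero => intro j hj hj0 z _ _; omega
    | succ n ih =>
      intro j hj hj0 z hz1 hz2
      by_cases h4 : j ≤ 4
      · exact H j hj0 h4 z hz1 hz2
      · have e : j = (j - 5) + 5 := by omega
        rw [e] at hz1 hz2
        exact ih (j - 5 + 1) (by omega) (by omega) z
          ((shiftu _ z).mp hz1) ((shiftv _ z).mp hz2)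
  exact fun k hk => final k k le_rfl hk

lemma part_one (hD : IsBipartiteTournament D V1 V2) (hnosink : ∀ v : V, ∃ w, D v w) :
    ∀ M : ℕ, 0 < M → ∀ u v : V, (cmGraph D M).Adj u v →
      ∃ m : ℕ, 0 < m ∧ m ≤ 4 ∧ (cmGraph D m).Adj u v := by
  intro M hM u v hadj
  obtain ⟨hne, z, hzu, hzv⟩ := cmGraph_adj'.mp hadj
  by_contra hcon
  push_neg at hcon
  have H : ∀ k, 0 < k → k ≤ 4 → ∀ w, walkN D k u w → walkN D k v w → False := by
    intro k hk hk4 w hw1 hw2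
    exact (hcon k hk hk4) (cmGraph_adj'.mpr ⟨hne, w, hw1, hw2⟩)
  have hu12 : u ∈ V1 ∪ V2 := by rw [hD.union_eq]; exact Set.mem_univ u
  have hv12 : v ∈ V1 ∪ V2 := by rw [hD.union_eq]; exact Set.mem_univ v
  rcases hu12 with hu | hu <;> rcases hv12 with hv | hv
  · exact key_lemma hD hnosink hu hv H M hM z hzu hzv
  · have t1 := (walk_side' hD M u z hzu).1 hu
    have t2 := (walk_side' hD M v z hzv).2 hv
    by_cases hE : Even M
    · exact bt_disj_elim hD z (t1.1 hE) (t2.1 hE)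
    · exact bt_disj_elim hD z (t2.2 hE) (t1.2 hE)
  · have t1 := (walk_side' hD M u z hzu).2 hu
    have t2 := (walk_side' hD M v z hzv).1 hv
    by_cases hE : Even M
    · exact bt_disj_elim hD z (t2.1 hE) (t1.1 hE)
    · exact bt_disj_elim hD z (t1.2 hE) (t2.2 hE)
  · exact key_lemma hD.symm' hnosink hu hv H M hM z hzu hzv

lemma cm_eq_four (hD : IsBipartiteTournament D V1 V2) (hnosink : ∀ v : V, ∃ w, D v w) :
    ∀ m, 4 ≤ m → cmGraph D m = cmGraph D 4 := by
  intro m hm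
  ext u v
  constructor
  · intro h
    obtain ⟨k, hk, hk4, h'⟩ := part_one hD hnosink m (by omega) u v h
    exact cmAdj_le' hnosink hk4 h'
  · intro h
    exact cmAdj_le' hnosink hm h

end CompetitionAux

/-- For a bipartite tournament without sinks, adjacency in `C^M(D)` implies
adjacency in `C^m(D)` for some positive `m ≤ 4`; consequently `cindex(D) ≤ 4` and
`cperiod(D) = 1`. -/
theorem cindex_le_four_of_no_sinks {V : Type*} [Fintype V] (D : V → V → Prop)
    (V1 V2 : Set V) (hD : IsBipartiteTournament D V1 V2)
    (hnosink : ∀ v : V, ∃ w : V, D v w) :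
    (∀ M : ℕ, 0 < M → ∀ u v : V, (cmGraph D M).Adj u v →
      ∃ m : ℕ, 0 < m ∧ m ≤ 4 ∧ (cmGraph D m).Adj u v) ∧
    (∀ q : ℕ, IsCindex D q → q ≤ 4) ∧
    (∀ q p : ℕ, IsCindex D q → IsCperiod D q p → p = 1) := by
  refine ⟨part_one hD hnosink, ?_, ?_⟩
  · intro q hq
    apply hq.2.2 4 (by norm_num)
    refine ⟨1, one_pos, fun i => ?_⟩
    rw [cm_eq_four hD hnosink (4 + i) (by omega), cm_eq_four hD hnosink (4 + 1 + i) (by omega)]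
  · intro q p hq hp
    obtain ⟨hq0, ⟨r, hr, hper⟩, _⟩ := hq
    have hiter : ∀ (s t : ℕ), cmGraph D (q + s) = cmGraph D (q + s + r * t) := by
      intro s t
      induction t with
      | zero => simp
      | succ n ihn =>
        have h := hper (s + r * n)
        have e1 : q + (s + r * n) = q + s + r * n := by ring
        have e2 : q + r + (s + r * n) = q + s + r * (n + 1) := by ring
        rw [e1, e2] at h
        rw [ihn, h]
    have h4 : cmGraph D q = cmGraph D 4 := by
      have h := hiter 0 4
      rw [Nat.add_zero] at h
      rw [h, cm_eq_four hD hnosink (q + r * 4) (by omega)]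
    have h5 : cmGraph D (q + 1) = cmGraph D 4 := by
      have h := hiter 1 4
      rw [h, cm_eq_four hD hnosink (q + 1 + r * 4) (by omega)]
    have hq1 : cmGraph D q = cmGraph D (q + 1) := by rw [h4, ← h5]
    obtain ⟨hp0, hpeq, hpmin⟩ := hp
    have := hpmin 1 one_pos hq1
    omega
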